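/- arXiv:2602.20832 — 4 statements merged into one kernel-verified Lean document; each statement's English description precedes it below -/
import Mathlib

section
/- Let F be a field of characteristic p, and let g_1, ..., g_n ∈ F[x] be polynomials each of degree at most d. If p = 0 or p > d, then g_1, ..., g_n are linearly dependent over F if and only if their Wronskian W(g_1, ..., g_n) is identically zero. -/
open Polynomial Finset

private lemma coeff_prod_of_natDegree_le'' {R : Type*} [CommSemiring R] {ι : Type*} (s : Finset ι)
    (f : ι → R[X]) (e : ι → ℕ) (h : ∀ i ∈ s, (f i).natDegree ≤ e i) :
    (∏ i ∈ s, f i).coeff (∑ i ∈ s, e i) = ∏ i ∈ s, (f i).coeff (e i) := by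
  induction s using Finset.cons_induction with
  | empty => simp
  | cons a s ha ih =>
    rw [Finset.prod_cons, Finset.sum_cons,
      coeff_mul_add_eq_of_natDegree_le (h a (Finset.mem_cons_self a s))
        (le_trans (natDegree_prod_le s f)
          (Finset.sum_le_sum fun i hi => h i (Finset.mem_cons_of_mem hi))),
      ih fun i hi => h i (Finset.mem_cons_of_mem hi), Finset.prod_cons]

private lemma strictMono_le_apply' {n : ℕ} {f : Fin n → ℕ} (hf : StrictMono f) (j : Fin n) :
    (j : ℕ) ≤ f j := by
  obtain ⟨m, hm⟩ := j
  induction m with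
  | zero => exact Nat.zero_le _
  | succ i ih =>
    exact Nat.lt_of_le_of_lt (ih (Nat.lt_of_succ_lt hm))
      (hf (show (⟨i, Nat.lt_of_succ_lt hm⟩ : Fin n) < ⟨i+1, hm⟩ from Nat.lt_succ_self i))

private lemma cast_ne_zero_of_char (F : Type*) [Field F] {d m : ℕ}
    (hp : ringChar F = 0 ∨ d < ringChar F) (hm0 : m ≠ 0) (hmd : m ≤ d) : (m : F) ≠ 0 := by
  intro h
  have hdvd : ringChar F ∣ m := (CharP.cast_eq_zero_iff F (ringChar F) m).mp h
  rcases hp with h0 | hlt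
  · rw [h0, zero_dvd_iff] at hdvd; exact hm0 hdvd
  · exact absurd (le_trans (Nat.le_of_dvd (Nat.pos_of_ne_zero hm0) hdvd) hmd) (not_le.mpr hlt)

private lemma det_ne_zero_of_strictMono (F : Type*) [Field F] (n d : ℕ) (g : Fin n → F[X])
    (h0 : ∀ j, g j ≠ 0) (hdeg : ∀ j, (g j).natDegree ≤ d)
    (hmono : StrictMono fun j => (g j).natDegree)
    (hp : ringChar F = 0 ∨ d < ringChar F) :
    Matrix.det (Matrix.of fun i j : Fin n =>
      (fun p : F[X] => derivative p)^[(i : ℕ)] (g j)) ≠ 0 := by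
  set k : Fin n → ℕ := fun j => (g j).natDegree with hk
  set D : ℕ := ∑ j, (k j - (j : ℕ)) with hD
  set V : Matrix (Fin n) (Fin n) F :=
    Matrix.of fun i j : Fin n => ((k j).descFactorial (i : ℕ) : F) with hV
  have hterm : ∀ σ : Equiv.Perm (Fin n),
      (∏ i, (fun p : F[X] => derivative p)^[((σ i : Fin n) : ℕ)] (g i)).coeff D
        = (∏ i, ((k i).descFactorial ((σ i : Fin n) : ℕ) : F)) * ∏ i, (g i).leadingCoeff := by
    intro σ
    by_cases hσ : ∀ i, ((σ i : Fin n) : ℕ) ≤ k i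
    · have hsum : ∑ i, (k i - ((σ i : Fin n) : ℕ)) = D := by
        rw [hD, Finset.sum_tsub_distrib _ (fun i _ => hσ i),
          Finset.sum_tsub_distrib _ (fun i _ => strictMono_le_apply' hmono i)]
        congr 1
        exact Equiv.sum_comp σ (fun i : Fin n => (i : ℕ))
      rw [← hsum, coeff_prod_of_natDegree_le'' _ _ _
        (fun i _ => natDegree_iterate_derivative (g i) _), ← Finset.prod_mul_distrib]
      refine Finset.prod_congr rfl fun i _ => ?_
      rw [coeff_iterate_derivative, Nat.sub_add_cancel (hσ i), nsmul_eq_mul]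
      rfl
    · push_neg at hσ
      obtain ⟨i, hi⟩ := hσ
      have l1 : (∏ i, (fun p : F[X] => derivative p)^[((σ i : Fin n) : ℕ)] (g i)) = 0 :=
        Finset.prod_eq_zero (Finset.mem_univ i) (iterate_derivative_eq_zero hi)
      have l2 : (∏ i, ((k i).descFactorial ((σ i : Fin n) : ℕ) : F)) = 0 :=
        Finset.prod_eq_zero (Finset.mem_univ i)
          (by rw [Nat.descFactorial_eq_zero_iff_lt.mpr hi, Nat.cast_zero])
      rw [l1, l2, coeff_zero, zero_mul]
  have hcoeff : (Matrix.det (Matrix.of fun i j : Fin n =>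
      (fun p : F[X] => derivative p)^[(i : ℕ)] (g j))).coeff D
      = V.det * ∏ i, (g i).leadingCoeff := by
    rw [Matrix.det_apply, finset_sum_coeff, Matrix.det_apply, Finset.sum_mul]
    refine Finset.sum_congr rfl fun σ _ => ?_
    simp only [hV, Matrix.of_apply, coeff_smul]
    rw [hterm σ, smul_mul_assoc]
  have hVdet : V.det ≠ 0 := by
    have hcast : Function.Injective fun i : Fin n => ((k i : ℕ) : F) := by
      intro i j hij
      change ((k i : ℕ) : F) = ((k j : ℕ) : F) at hij
      by_contra hne
      rcases Ne.lt_or_gt (fun h : k i = k j => hne (hmono.injective h)) with h | h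
      · exact cast_ne_zero_of_char F hp (Nat.sub_ne_zero_of_lt h)
          (le_trans (Nat.sub_le _ _) (hdeg j))
          (by rw [Nat.cast_sub h.le, hij, sub_self])
      · exact cast_ne_zero_of_char F hp (Nat.sub_ne_zero_of_lt h)
          (le_trans (Nat.sub_le _ _) (hdeg i))
          (by rw [Nat.cast_sub h.le, hij, sub_self])
    have hVeq : V.det = (Matrix.vandermonde fun i : Fin n => ((k i : ℕ) : F)).det := by
      rw [Matrix.det_eval_matrixOfPolynomials_eq_det_vandermonde
        (fun i : Fin n => ((k i : ℕ) : F)) (fun i : Fin n => descPochhammer F (i : ℕ))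
        (fun i => descPochhammer_natDegree F (i : ℕ))
        (fun i => monic_descPochhammer F (i : ℕ)), ← Matrix.det_transpose]
      congr 1
      ext i j
      simp [Matrix.transpose_apply, hV, descPochhammer_eval_eq_descFactorial]
    rw [hVeq]
    exact Matrix.det_vandermonde_ne_zero_iff.mpr hcast
  intro hdet
  rw [hdet, coeff_zero] at hcoeff
  exact (mul_ne_zero hVdet (Finset.prod_ne_zero_iff.mpr
    fun i _ => leadingCoeff_ne_zero.mpr (h0 i))) hcoeff.symm

private lemma det_ne_zero_of_injective' (F : Type*) [Field F] (n d : ℕ) (g : Fin n → F[X])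
    (h0 : ∀ j, g j ≠ 0) (hdeg : ∀ j, (g j).natDegree ≤ d)
    (hinj : Function.Injective fun j => (g j).natDegree)
    (hp : ringChar F = 0 ∨ d < ringChar F) :
    Matrix.det (Matrix.of fun i j : Fin n =>
      (fun p : F[X] => derivative p)^[(i : ℕ)] (g j)) ≠ 0 := by
  set σ := Tuple.sort (fun j => (g j).natDegree) with hσ
  have hmono : StrictMono fun j => ((g ∘ σ) j).natDegree := by
    have hm : Monotone ((fun j => (g j).natDegree) ∘ σ) := Tuple.monotone_sort _
    exact hm.strictMono_of_injective (hinj.comp σ.injective)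
  intro hdet
  refine det_ne_zero_of_strictMono F n d (g ∘ σ) (fun j => h0 _) (fun j => hdeg _) hmono hp ?_
  have heq : (Matrix.of fun i j : Fin n =>
      (fun p : F[X] => derivative p)^[(i : ℕ)] ((g ∘ σ) j))
      = (Matrix.of fun i j : Fin n =>
        (fun p : F[X] => derivative p)^[(i : ℕ)] (g j)).submatrix id σ := rfl
  rw [heq, Matrix.det_permute', hdet, mul_zero]

private lemma li_update (F : Type*) [Field F] {n : ℕ} (g : Fin n → F[X]) {j k : Fin n}
    (hjk : j ≠ k) (c : F) (h : LinearIndependent F g) :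
    LinearIndependent F (Function.update g j (g j - c • g k)) := by
  rw [Fintype.linearIndependent_iff] at h ⊢
  intro a hsum0
  set g' := Function.update g j (g j - c • g k) with hg'
  set b : Fin n → F := fun x => if x = k then a k - a j * c else a x with hb
  have hd1 : (∑ x, a x • g x) - ∑ x, b x • g x = (a j * c) • g k := by
    rw [← Finset.sum_sub_distrib]
    have : ∀ x, a x • g x - b x • g x = (a x - b x) • g x := fun x => (sub_smul _ _ _).symm
    rw [Finset.sum_congr rfl fun x _ => this x,
      Finset.sum_eq_single k (fun x _ hx => by simp [hb, hx]) (by simp)]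
    simp [hb]
  have hd2 : (∑ x, a x • g x) - ∑ x, a x • g' x = (a j * c) • g k := by
    rw [← Finset.sum_sub_distrib]
    have : ∀ x, a x • g x - a x • g' x = a x • (g x - g' x) := fun x => (smul_sub _ _ _).symm
    rw [Finset.sum_congr rfl fun x _ => this x,
      Finset.sum_eq_single j (fun x _ hx => by simp [hg', Function.update_of_ne hx]) (by simp)]
    simp [hg', smul_smul, smul_sub]
  have hbsum : ∑ x, b x • g x = 0 := by
    have heq : ∑ x, b x • g x = ∑ x, a x • g' x := by
      rw [← sub_sub_cancel (∑ x, a x • g x) (∑ x, b x • g x), hd1, ← hd2, sub_sub_cancel]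
    rw [heq, hsum0]
  have hb0 := h b hbsum
  have haj : a j = 0 := by have := hb0 j; simpa [hb, hjk] using this
  intro i
  by_cases hik : i = k
  · subst hik; have := hb0 i; simp only [hb, if_pos rfl, haj, zero_mul, sub_zero] at this
    exact this
  · have := hb0 i; simpa [hb, hik] using this

private lemma not_li_of_det_zero (F : Type*) [Field F] (n d : ℕ)
    (hp : ringChar F = 0 ∨ d < ringChar F) :
    ∀ (N : ℕ) (g : Fin n → F[X]), (∑ j, (g j).natDegree) ≤ N → (∀ j, (g j).natDegree ≤ d) →
    Matrix.det (Matrix.of fun i j : Fin n =>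
      (fun p : F[X] => derivative p)^[(i : ℕ)] (g j)) = 0 → ¬ LinearIndependent F g := by
  intro N
  induction N using Nat.strong_induction_on with
  | _ N ih =>
  intro g hsum hdeg hdet
  by_cases hz : ∃ j, g j = 0
  · obtain ⟨j, hj⟩ := hz
    intro hLI; exact hLI.ne_zero j hj
  push_neg at hz
  by_cases hinj : Function.Injective fun j => (g j).natDegree
  · exact absurd hdet (det_ne_zero_of_injective' F n d g hz hdeg hinj hp)
  simp only [Function.Injective, not_forall] at hinj
  obtain ⟨j, kk, hjk, hne⟩ := hinj
  set c : F := (g j).leadingCoeff / (g kk).leadingCoeff with hc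
  have hlj : (g j).leadingCoeff ≠ 0 := leadingCoeff_ne_zero.mpr (hz j)
  have hlk : (g kk).leadingCoeff ≠ 0 := leadingCoeff_ne_zero.mpr (hz kk)
  have hc0 : c ≠ 0 := div_ne_zero hlj hlk
  set g' := Function.update g j (g j - c • g kk) with hg'
  intro hLI
  have hLI' : LinearIndependent F g' := li_update F g hne c hLI
  -- the updated column cannot vanish
  have hzero : g' j ≠ 0 := hLI'.ne_zero j
  have hgj' : g' j = g j - c • g kk := Function.update_self _ _ _
  -- determinant unchanged under the column operation
  have hdet' : Matrix.det (Matrix.of fun i x : Fin n =>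
      (fun p : F[X] => derivative p)^[(i : ℕ)] (g' x)) = 0 := by
    have hM : (Matrix.of fun i x : Fin n =>
        (fun p : F[X] => derivative p)^[(i : ℕ)] (g' x))
        = Matrix.updateCol (Matrix.of fun i x : Fin n =>
            (fun p : F[X] => derivative p)^[(i : ℕ)] (g x)) j
          (fun i => (Matrix.of fun i x : Fin n =>
            (fun p : F[X] => derivative p)^[(i : ℕ)] (g x)) i j
            + (-(C c)) • (Matrix.of fun i x : Fin n =>
            (fun p : F[X] => derivative p)^[(i : ℕ)] (g x)) i kk) := by
      ext i x
      by_cases hx : x = j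
      · subst hx
        simp only [Matrix.updateCol_self, Matrix.of_apply, hgj',
          iterate_derivative_sub, iterate_derivative_smul]
        rw [smul_eq_mul, smul_eq_C_mul, sub_eq_add_neg, neg_mul]
      · simp [Matrix.updateCol_ne hx, hg', Function.update_of_ne hx]
    rw [hM, Matrix.det_updateCol_add_smul_self _ hne (-(C c)), hdet]
  -- degrees drop
  have hdegeq : (g j).degree = (c • g kk).degree := by
    rw [smul_eq_C_mul, degree_mul, degree_C hc0, zero_add,
      degree_eq_natDegree (hz j), degree_eq_natDegree (hz kk), hjk]
  have hleadeq : (g j).leadingCoeff = (c • g kk).leadingCoeff := by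
    rw [smul_eq_C_mul, leadingCoeff_mul, leadingCoeff_C, hc, div_mul_cancel₀ _ hlk]
  have hlt : (g' j).natDegree < (g j).natDegree := by
    refine natDegree_lt_natDegree hzero ?_
    rw [hgj']
    exact degree_sub_lt hdegeq (hz j) hleadeq
  have hsum' : (∑ x, (g' x).natDegree) < ∑ x, (g x).natDegree := by
    refine Finset.sum_lt_sum (fun x _ => ?_) ⟨j, Finset.mem_univ j, hlt⟩
    by_cases hx : x = j
    · rw [hx]; exact hlt.le
    · simp [hg', Function.update_of_ne hx]
  have hdeg' : ∀ x, (g' x).natDegree ≤ d := by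
    intro x
    by_cases hx : x = j
    · rw [hx]; exact le_trans hlt.le (hdeg j)
    · simpa [hg', Function.update_of_ne hx] using hdeg x
  rcases Nat.lt_or_ge (∑ x, (g' x).natDegree) N with hN | hN
  · exact ih _ hN g' le_rfl hdeg' hdet' hLI'
  · exact absurd (lt_of_lt_of_le hsum' hsum) (not_lt.mpr hN)

/-- Over a field of characteristic `0` or `p > d`, polynomials of degree at most `d`
are linearly dependent iff their Wronskian vanishes identically. -/
theorem stmt1 (F : Type*) [Field F] (n d : ℕ) (g : Fin n → F[X])
    (hdeg : ∀ i, (g i).natDegree ≤ d)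
    (hp : ringChar F = 0 ∨ d < ringChar F) :
    ¬ LinearIndependent F g ↔
      Matrix.det (Matrix.of fun i j : Fin n =>
        (fun p : F[X] => derivative p)^[(i : ℕ)] (g j)) = 0 := by
  constructor
  · intro hnli
    obtain ⟨a, hsum, i0, hi0⟩ := Fintype.not_linearIndependent_iff.mp hnli
    rw [← Matrix.exists_mulVec_eq_zero_iff]
    refine ⟨fun j => C (a j), ?_, ?_⟩
    · intro h
      apply hi0
      have := congrFun h i0
      simpa using this
    · funext i
      show ∑ j, (fun p : F[X] => derivative p)^[(i : ℕ)] (g j) * C (a j) = 0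
      have hcongr : ∀ j, (fun p : F[X] => derivative p)^[(i : ℕ)] (g j) * C (a j)
          = (fun p : F[X] => derivative p)^[(i : ℕ)] (a j • g j) := by
        intro j
        rw [iterate_derivative_smul, smul_eq_C_mul, mul_comm]
      rw [Finset.sum_congr rfl fun j _ => hcongr j, ← iterate_derivative_sum, hsum]
      simp
  · intro hdet
    exact not_li_of_det_zero F n d hp (∑ j, (g j).natDegree) g le_rfl hdeg hdet
end

section
/- Let f_1, ..., f_r ∈ F[x] have degrees δ_i ≤ δ, let d ≥ r, and let W_k(x) be the (0-indexed) k-th cofactor in the Laplace expansion along the first column of the (r+1)×(r+1) Wronskian matrix of (f, f_1^d, ..., f_r^d), i.e., the determinant of the r×r minor obtained by deleting row k and the first column. Then W_k(x) = (∏_{i=1}^{r} f_i^{d-r}) · P̃_k(x) for some polynomial P̃_k of degree at most r²δ. -/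
open Polynomial

lemma iterate_deriv_pow_factor {F : Type*} [Field F] (f : F[X]) (δ d m : ℕ)
    (hf : f.natDegree ≤ δ) (hm : m ≤ d) :
    ∃ g : F[X], g.natDegree ≤ m * δ ∧
      (fun p : F[X] => derivative p)^[m] (f ^ d) = f ^ (d - m) * g := by
  induction m with
  | zero => exact ⟨1, by simp⟩
  | succ n ih =>
    obtain ⟨g, hg, he⟩ := ih (by omega)
    refine ⟨((d - n : ℕ) : F[X]) * (derivative f * g) + f * derivative g, ?_, ?_⟩
    · apply natDegree_add_le_of_degree_le
      · refine (natDegree_mul_le).trans ?_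
        have : (((d - n : ℕ) : F[X])).natDegree = 0 := natDegree_natCast _
        rw [this, zero_add]
        refine (natDegree_mul_le).trans ?_
        have h1 : (derivative f).natDegree ≤ δ :=
          le_trans (natDegree_derivative_le f) (le_trans (Nat.sub_le _ _) hf)
        calc (derivative f).natDegree + g.natDegree ≤ δ + n * δ :=
              add_le_add h1 hg
          _ = (n + 1) * δ := by ring
      · refine (natDegree_mul_le).trans ?_
        have h2 : (derivative g).natDegree ≤ n * δ :=
          le_trans (natDegree_derivative_le g) (le_trans (Nat.sub_le _ _) hg)
        calc f.natDegree + (derivative g).natDegree ≤ δ + n * δ :=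
              add_le_add hf h2
          _ = (n + 1) * δ := by ring
    · rw [Function.iterate_succ_apply', he, derivative_mul, derivative_pow,
        C_eq_natCast]
      have h1 : d - n = (d - (n + 1)) + 1 := by omega
      rw [h1, pow_succ]
      push_cast
      ring

lemma natDegree_det_le_of_forall {F : Type*} [Field F] {n : ℕ}
    (M : Matrix (Fin n) (Fin n) F[X]) (b : ℕ) (h : ∀ i j, (M i j).natDegree ≤ b) :
    M.det.natDegree ≤ n * b := by
  rw [Matrix.det_apply]
  refine natDegree_sum_le_of_forall_le _ _ fun σ _ => ?_
  refine le_trans ?_ (le_trans (natDegree_prod_le Finset.univ fun i => M (σ i) i) ?_)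
  · have : (Equiv.Perm.sign σ • ∏ i, M (σ i) i) = ((Equiv.Perm.sign σ : ℤ) : F[X]) *
        ∏ i, M (σ i) i := by
      rw [Units.smul_def, zsmul_eq_mul]
    rw [this]
    refine natDegree_mul_le.trans ?_
    simp [natDegree_intCast]
  · calc ∑ i, (M (σ i) i).natDegree ≤ ∑ _i : Fin n, b :=
        Finset.sum_le_sum fun i _ => h (σ i) i
      _ = n * b := by simp [mul_comm]

/-- Each cofactor `W_k` from the Laplace expansion along the first column of the
`(r+1)×(r+1)` Wronskian matrix of `(f, f_1^d, …, f_r^d)` factors as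
`(∏_i f_i^{d-r}) · P̃_k` with `deg P̃_k ≤ r²δ`. -/
theorem stmt8 (F : Type*) [Field F] (r d δ : ℕ) (hd : r ≤ d)
    (f : Fin r → F[X]) (hdeg : ∀ i, (f i).natDegree ≤ δ)
    (k : Fin (r + 1)) :
    ∃ P : F[X], P.natDegree ≤ r ^ 2 * δ ∧
      Matrix.det (Matrix.of fun i j : Fin r =>
          (fun p : F[X] => derivative p)^[((k.succAbove i : Fin (r + 1)) : ℕ)]
            (f j ^ d)) =
        (∏ i, f i ^ (d - r)) * P := by
  have hm : ∀ i : Fin r, ((k.succAbove i : Fin (r + 1)) : ℕ) ≤ r :=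
    fun i => Nat.lt_succ_iff.mp (k.succAbove i).isLt
  have key : ∀ i j : Fin r, ∃ g : F[X], g.natDegree ≤ r * δ ∧
      (fun p : F[X] => derivative p)^[((k.succAbove i : Fin (r + 1)) : ℕ)] (f j ^ d)
        = f j ^ (d - r) * g := by
    intro i j
    set m := ((k.succAbove i : Fin (r + 1)) : ℕ) with hmdef
    obtain ⟨g, hg, he⟩ := iterate_deriv_pow_factor (f j) δ d m (hdeg j)
      (le_trans (hm i) hd)
    refine ⟨f j ^ (r - m) * g, ?_, ?_⟩
    · refine natDegree_mul_le.trans ?_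
      have : (f j ^ (r - m)).natDegree ≤ (r - m) * δ := by
        rw [natDegree_pow]
        exact Nat.mul_le_mul_left _ (hdeg j)
      calc (f j ^ (r - m)).natDegree + g.natDegree ≤ (r - m) * δ + m * δ :=
            add_le_add this hg
        _ = ((r - m) + m) * δ := by ring
        _ = r * δ := by rw [Nat.sub_add_cancel (hm i)]
    · rw [he]
      have : d - m = (d - r) + (r - m) := by omega
      rw [this, pow_add, mul_assoc]
  choose g hgdeg hge using key
  refine ⟨Matrix.det (Matrix.of fun i j : Fin r => g i j), ?_, ?_⟩
  · refine le_trans (natDegree_det_le_of_forall _ (r * δ) fun i j => hgdeg i j) ?_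
    rw [← mul_assoc, ← pow_two]
  · have : (Matrix.of fun i j : Fin r =>
        (fun p : F[X] => derivative p)^[((k.succAbove i : Fin (r + 1)) : ℕ)]
          (f j ^ d)) = Matrix.of fun i j : Fin r => (f j ^ (d - r)) * g i j := by
      exact Matrix.ext fun i j => hge i j
    rw [this, Matrix.det_mul_row (fun j => f j ^ (d - r)) g]
    rfl
end

section
/- Let F have characteristic p = 0 or p > dδ, and suppose f = ∑_{i=1}^{r} β_i f_i^d with f_1^d, ..., f_r^d linearly independent, deg f_i ≤ δ. Let L̃ = ∑_{i=0}^{r} P_i(x) ∇^i be the operator obtained from the Laplace expansion of the Wronskian W(f, f_1^d, ..., f_r^d) along its first column after dividing out the common gcd of the cofactors. Then L̃ is a nonzero operator, L̃(f) = 0, L̃(f_i^d) = 0 for all i, and the kernel of L̃ among polynomials of degree ≤ dδ is exactly span{f_1^d, ..., f_r^d}. -/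
open Polynomial

/-- The `k`-th cofactor (along the first column) of the Wronskian matrix of
`(f, f_1^d, …, f_r^d)`: the determinant of the minor deleting row `k` and the
first column. -/
noncomputable def wronskiCofactor {F : Type*} [Field F] (r d : ℕ)
    (fs : Fin r → F[X]) (k : Fin (r + 1)) : F[X] :=
  Matrix.det (Matrix.of fun i j : Fin r =>
    (fun p : F[X] => derivative p)^[((k.succAbove i : Fin (r + 1)) : ℕ)] (fs j ^ d))

/-- The signed cofactor with the common factor `∏_j f_j^{d-r}` divided out. -/
noncomputable def wronskiPtilde {F : Type*} [Field F] (r d : ℕ)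
    (fs : Fin r → F[X]) (k : Fin (r + 1)) : F[X] :=
  ((-1 : F[X]) ^ (k : ℕ) * wronskiCofactor r d fs k) / ∏ j, fs j ^ (d - r)

/-- The normalized coefficients `P_k` of the operator `L̃`, obtained by dividing the
`P̃_k` by their common gcd. -/
noncomputable def wronskiP {F : Type*} [Field F] [DecidableEq F] (r d : ℕ)
    (fs : Fin r → F[X]) (k : Fin (r + 1)) : F[X] :=
  wronskiPtilde r d fs k / Finset.univ.gcd (wronskiPtilde r d fs)

section Aux

open Finset

variable {F : Type*} [Field F]

variable {F : Type*} [Field F]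

lemma iterDeriv_sum {ι : Type*} (s : Finset ι) (h : ι → F[X]) (k : ℕ) :
    derivative^[k] (∑ i ∈ s, h i) = ∑ i ∈ s, derivative^[k] (h i) := by
  induction k with
  | zero => simp
  | succ k ih => simp [Function.iterate_succ_apply', ih, derivative_sum]

lemma iterDeriv_lincomb {ι : Type*} (s : Finset ι) (γ : ι → F) (h : ι → F[X]) (k : ℕ) :
    derivative^[k] (∑ i ∈ s, γ i • h i) = ∑ i ∈ s, γ i • derivative^[k] (h i) := by
  rw [iterDeriv_sum]
  exact Finset.sum_congr rfl fun i _ => iterate_derivative_smul _ _ _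

lemma coeff_prod_le {ι : Type*} (s : Finset ι) (p : ι → F[X]) (b : ι → ℕ)
    (h : ∀ i ∈ s, (p i).natDegree ≤ b i) :
    (∏ i ∈ s, p i).coeff (∑ i ∈ s, b i) = ∏ i ∈ s, (p i).coeff (b i) := by
  induction s using Finset.cons_induction with
  | empty => simp
  | cons a s ha ih =>
      rw [Finset.prod_cons, Finset.sum_cons,
        coeff_mul_add_eq_of_natDegree_le (h a (Finset.mem_cons_self a s))
          ((natDegree_prod_le _ _).trans (Finset.sum_le_sum fun i hi => h i (Finset.mem_cons_of_mem hi))),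
        ih fun i hi => h i (Finset.mem_cons_of_mem hi), Finset.prod_cons]

lemma coeff_det {n : ℕ} (Q : Matrix (Fin n) (Fin n) F[X]) (b : Fin n → ℕ)
    (h : ∀ i j, (Q i j).natDegree ≤ b j) :
    (Q.det).coeff (∑ j, b j) = (Matrix.of fun i j => (Q i j).coeff (b j)).det := by
  rw [Matrix.det_apply', Matrix.det_apply', Polynomial.finset_sum_coeff]
  refine Finset.sum_congr rfl fun σ _ => ?_
  rw [← Polynomial.C_eq_intCast, Polynomial.coeff_C_mul,
    coeff_prod_le _ _ _ fun i _ => h (σ i) i]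
  simp [Matrix.of_apply]

lemma natCast_inj_of_le {D : ℕ} (hchar : ringChar F = 0 ∨ D < ringChar F)
    {a b : ℕ} (ha : a ≤ D) (hb : b ≤ D) (hab : (a : F) = b) : a = b := by
  haveI : CharP F (ringChar F) := ringChar.charP F
  rcases hchar with h0 | hD
  · haveI : CharP F 0 := h0 ▸ ringChar.charP F
    haveI : CharZero F := CharP.charP_to_charZero F
    exact Nat.cast_injective hab
  · rcases le_total a b with hle | hle
    · have : ((b - a : ℕ) : F) = 0 := by
        rw [Nat.cast_sub hle, hab, sub_self]
      have hdvd := (CharP.cast_eq_zero_iff F (ringChar F) _).mp this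
      rcases Nat.eq_zero_or_pos (b - a) with h | h
      · omega
      · have := Nat.le_of_dvd h hdvd
        omega
    · have : ((a - b : ℕ) : F) = 0 := by
        rw [Nat.cast_sub hle, hab, sub_self]
      have hdvd := (CharP.cast_eq_zero_iff F (ringChar F) _).mp this
      rcases Nat.eq_zero_or_pos (a - b) with h | h
      · omega
      · have := Nat.le_of_dvd h hdvd
        omega

/-- The key lemma: the Wronskian of linearly independent polynomials of degree
at most `D` is nonzero, provided the characteristic is `0` or `> D`. -/
theorem wronskian_det_ne_zero {n D : ℕ} (hchar : ringChar F = 0 ∨ D < ringChar F)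
    (v : Fin n → F[X]) (hdeg : ∀ j, (v j).natDegree ≤ D)
    (hind : LinearIndependent F v) :
    (Matrix.of fun i j : Fin n => (fun p : F[X] => derivative p)^[(i : ℕ)] (v j)).det ≠ 0 := by
  classical
  intro hdet
  set V : Submodule F F[X] := Submodule.span F (Set.range v) with hV
  have hVdeg : ∀ g ∈ V, g.natDegree ≤ D := by
    intro g hg
    have hle : V ≤ Polynomial.degreeLE F (D : ℕ) := by
      rw [hV, Submodule.span_le]
      rintro x ⟨j, rfl⟩
      exact Polynomial.mem_degreeLE.mpr (Polynomial.natDegree_le_iff_degree_le.mp (hdeg j))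
    exact Polynomial.natDegree_le_iff_degree_le.mpr (Polynomial.mem_degreeLE.mp (hle hg))
  -- the set of degrees attained by nonzero elements of `V`
  set T : Finset ℕ := (Finset.range (D + 1)).filter
    (fun e => ∃ g, g ∈ V ∧ g ≠ 0 ∧ g.natDegree = e) with hT
  -- `n ≤ T.card` by a dimension count
  have hcard : n ≤ T.card := by
    have hrk : Module.finrank F V = n := by
      rw [hV, finrank_span_eq_card hind, Fintype.card_fin]
    let Φ : V →ₗ[F] ({x // x ∈ T} → F) :=
      LinearMap.pi fun e => (Polynomial.lcoeff F (e : ℕ)).comp V.subtype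
    have hinj : Function.Injective Φ := by
      rw [← LinearMap.ker_eq_bot]
      apply LinearMap.ker_eq_bot'.mpr
      intro g hgker
      by_contra hg0
      have hgne : (g : F[X]) ≠ 0 := fun h => hg0 (Subtype.ext h)
      have hmem : (g : F[X]).natDegree ∈ T := by
        rw [hT, Finset.mem_filter, Finset.mem_range]
        exact ⟨Nat.lt_succ_of_le (hVdeg _ g.2), g, g.2, hgne, rfl⟩
      have := congrFun hgker ⟨_, hmem⟩
      simp only [Φ, LinearMap.pi_apply, LinearMap.comp_apply, Submodule.subtype_apply,
        Polynomial.lcoeff_apply, Pi.zero_apply] at this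
      exact Polynomial.leadingCoeff_ne_zero.mpr hgne this
    calc n = Module.finrank F V := hrk.symm
      _ ≤ Module.finrank F ({x // x ∈ T} → F) := LinearMap.finrank_le_finrank_of_injective hinj
      _ = T.card := by rw [Module.finrank_fintype_fun_eq_card, Fintype.card_coe]
  obtain ⟨emb⟩ : Nonempty (Fin n ↪ {x // x ∈ T}) :=
    Function.Embedding.nonempty_of_card_le (by simpa using hcard)
  set e : Fin n → ℕ := fun j => (emb j : ℕ) with he
  have he_inj : Function.Injective e :=
    fun a b hab => emb.injective (Subtype.ext hab)
  have he_prop : ∀ j, e j ≤ D ∧ ∃ g, g ∈ V ∧ g ≠ 0 ∧ g.natDegree = e j := by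
    intro j
    have h2 := Finset.mem_filter.mp (emb j).2
    have h3 := Finset.mem_range.mp h2.1
    exact ⟨Nat.lt_succ_iff.mp h3, h2.2⟩
  choose w hwV hw0 hwdeg using fun j => (he_prop j).2
  have he_le : ∀ j, e j ≤ D := fun j => (he_prop j).1
  -- express the `w j` in terms of the `v k`
  have hcoef : ∀ j, ∃ γ : Fin n → F, ∑ k, γ k • v k = w j := fun j =>
    Submodule.mem_span_range_iff_exists_fun F |>.mp (hwV j)
  choose γ hγ using hcoef
  -- the Wronskian of the `w j` also vanishes
  have hdetw : (Matrix.of fun i j : Fin n => derivative^[(i : ℕ)] (w j)).det = 0 := by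
    have hmul : (Matrix.of fun i j : Fin n => derivative^[(i : ℕ)] (w j)) =
        (Matrix.of fun i j : Fin n => derivative^[(i : ℕ)] (v j)) *
          (Matrix.of fun k j : Fin n => Polynomial.C (γ j k)) := by
      apply Matrix.ext
      intro i j
      rw [Matrix.mul_apply]
      simp only [Matrix.of_apply]
      rw [← hγ j, iterDeriv_lincomb]
      exact Finset.sum_congr rfl fun k _ => by
        rw [Polynomial.smul_eq_C_mul, mul_comm]
    rw [hmul, Matrix.det_mul, hdet, zero_mul]
  have hdetw' : (Matrix.det fun i j : Fin n => derivative^[(i : ℕ)] (w j)) = 0 := hdetw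
  -- scale row `i` by `X ^ i`
  set M' : Matrix (Fin n) (Fin n) F[X] :=
    Matrix.of fun i j : Fin n => X ^ (i : ℕ) * derivative^[(i : ℕ)] (w j) with hM'
  have hdetM' : M'.det = 0 := by
    have := Matrix.det_mul_column (fun i : Fin n => (X : F[X]) ^ (i : ℕ)) (Matrix.of fun i j : Fin n => derivative^[(i : ℕ)] (w j))
    simp only [Matrix.of_apply] at this
    rw [hM', this, hdetw, mul_zero]
  have hdegM' : ∀ i j, (M' i j).natDegree ≤ e j := by
    intro i j
    by_cases h : (i : ℕ) ≤ e j
    · refine (natDegree_mul_le (p := X ^ (i : ℕ)) (q := derivative^[(i : ℕ)] (w j))).trans ?_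
      have h1 : (X ^ (i : ℕ) : F[X]).natDegree = (i : ℕ) := natDegree_X_pow _
      have h2 : (derivative^[(i : ℕ)] (w j)).natDegree ≤ e j - (i : ℕ) := by
        have := natDegree_iterate_derivative (w j) (i : ℕ)
        rwa [hwdeg j] at this
      omega
    · have : derivative^[(i : ℕ)] (w j) = 0 :=
        iterate_derivative_eq_zero (by rw [hwdeg j]; omega)
      simp only [M', Matrix.of_apply, this, mul_zero, natDegree_zero]
      exact Nat.zero_le _
  -- the top coefficient of `det M'` is essentially a Vandermonde determinant
  have hcoeff := coeff_det M' e hdegM'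
  rw [hdetM', Polynomial.coeff_zero] at hcoeff
  have hentry : ∀ i j : Fin n, (M' i j).coeff (e j) =
      (w j).leadingCoeff * (((e j).descFactorial (i : ℕ) : ℕ) : F) := by
    intro i j
    by_cases h : (i : ℕ) ≤ e j
    · have hej : e j = (e j - (i : ℕ)) + (i : ℕ) := by omega
      rw [hM', Matrix.of_apply, hej, Polynomial.coeff_X_pow_mul,
        Polynomial.coeff_iterate_derivative]
      rw [← hej, Polynomial.leadingCoeff, hwdeg j]
      rw [nsmul_eq_mul, mul_comm]
    · have h0 : derivative^[(i : ℕ)] (w j) = 0 :=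
        iterate_derivative_eq_zero (by rw [hwdeg j]; omega)
      have hd0 : (e j).descFactorial (i : ℕ) = 0 :=
        Nat.descFactorial_eq_zero_iff_lt.mpr (by omega)
      simp [hM', h0, hd0]
  have hAfact : (Matrix.of fun i j : Fin n => (M' i j).coeff (e j)).det =
      (∏ j, (w j).leadingCoeff) *
        (Matrix.of fun i j : Fin n => (((e j).descFactorial (i : ℕ) : ℕ) : F)).det := by
    have h1 : (Matrix.of fun i j : Fin n => (M' i j).coeff (e j)) =
        Matrix.of fun i j : Fin n => (w j).leadingCoeff *
          (Matrix.of fun i j : Fin n => (((e j).descFactorial (i : ℕ) : ℕ) : F)) i j := by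
      apply Matrix.ext
      intro i j
      simp [hentry i j]
    rw [h1, Matrix.det_mul_row]
  -- the descFactorial determinant is a Vandermonde determinant
  have hvdm : (Matrix.of fun i j : Fin n => (((e j).descFactorial (i : ℕ) : ℕ) : F)).det ≠ 0 := by
    have htr : (Matrix.of fun i j : Fin n => (((e j).descFactorial (i : ℕ) : ℕ) : F)) =
        (Matrix.of fun i j : Fin n => (descPochhammer F (j : ℕ)).eval ((e i : ℕ) : F)).transpose := by
      ext i j
      simp [Matrix.transpose_apply, descPochhammer_eval_eq_descFactorial]
    rw [htr, Matrix.det_transpose,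
      ← Matrix.det_eval_matrixOfPolynomials_eq_det_vandermonde
        (fun i : Fin n => ((e i : ℕ) : F)) (fun i => descPochhammer F (i : ℕ))
        (fun i => descPochhammer_natDegree F (i : ℕ))
        (fun i => monic_descPochhammer F (i : ℕ))]
    rw [Ne, Matrix.det_vandermonde_eq_zero_iff]
    rintro ⟨i, j, hij, hne⟩
    exact hne (he_inj (natCast_inj_of_le hchar (he_le i) (he_le j) hij))
  rw [hAfact] at hcoeff
  have hlc : (∏ j, (w j).leadingCoeff) ≠ 0 :=
    Finset.prod_ne_zero_iff.mpr fun j _ => Polynomial.leadingCoeff_ne_zero.mpr (hw0 j)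
  exact (mul_ne_zero hlc hvdm) hcoeff.symm

lemma pow_sub_dvd_iterate_derivative_pow (f : F[X]) (d i : ℕ) :
    f ^ (d - i) ∣ derivative^[i] (f ^ d) := by
  induction i with
  | zero => simp
  | succ i ih =>
      obtain ⟨q, hq⟩ := ih
      rw [Function.iterate_succ_apply', hq, derivative_mul]
      apply dvd_add
      · apply dvd_mul_of_dvd_left
        rw [derivative_pow]
        have h1 : f ^ (d - (i + 1)) ∣ f ^ (d - i - 1) := by
          rw [Nat.sub_sub]
        exact h1.trans (dvd_mul_of_dvd_left (dvd_mul_left _ _) _)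
      · exact dvd_mul_of_dvd_left (pow_dvd_pow f (by omega)) _

lemma laplace_key (r d : ℕ) (fs : Fin r → F[X]) (g : F[X]) (γ : Fin r → F)
    (hg : g = ∑ j, γ j • fs j ^ d) :
    ∑ k : Fin (r + 1), (-1 : F[X]) ^ (k : ℕ) *
      ((fun p : F[X] => derivative p)^[(k : ℕ)] g) * wronskiCofactor r d fs k = 0 := by
  classical
  set G : Fin (r + 1) → F[X] := Fin.cons g (fun j => fs j ^ d) with hGdef
  set Ng : Matrix (Fin (r + 1)) (Fin (r + 1)) F[X] :=
    Matrix.of fun i j => derivative^[(i : ℕ)] (G j) with hNg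
  have hdet0 : Ng.det = 0 := by
    apply Matrix.exists_mulVec_eq_zero_iff.mp
    refine ⟨Fin.cons 1 (fun j => -Polynomial.C (γ j)), ?_, ?_⟩
    · intro h
      have h0 := congrFun h 0
      simp only [Fin.cons_zero, Pi.zero_apply] at h0
      exact one_ne_zero h0
    · funext i
      simp only [Matrix.mulVec, dotProduct, Pi.zero_apply]
      rw [Fin.sum_univ_succ]
      simp only [hNg, Matrix.of_apply, hGdef, Fin.cons_zero, Fin.cons_succ]
      rw [hg, iterDeriv_lincomb, mul_one, ← Finset.sum_add_distrib]
      apply Finset.sum_eq_zero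
      intro j _
      rw [Polynomial.smul_eq_C_mul]
      ring
  have hlap := Matrix.det_succ_column_zero Ng
  rw [hdet0] at hlap
  refine Eq.trans (Finset.sum_congr rfl fun k _ => ?_) hlap.symm
  have h1 : Ng k 0 = (fun p : F[X] => derivative p)^[(k : ℕ)] g := by
    simp [hNg, hGdef]
  have h2 : (Ng.submatrix k.succAbove Fin.succ).det = wronskiCofactor r d fs k := by
    have hmat : Ng.submatrix k.succAbove Fin.succ = Matrix.of fun i j : Fin r =>
        (fun p : F[X] => derivative p)^[((k.succAbove i : Fin (r + 1)) : ℕ)] (fs j ^ d) := by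
      apply Matrix.ext
      intro i j
      simp [hNg, hGdef, Matrix.submatrix_apply, Fin.cons_succ]
    rw [hmat]
    rfl
  rw [h2]
  try rw [h1]

end Aux

/-- The operator `L̃ = ∑ P_i ∇^i` obtained from the Laplace expansion of
`W(f, f_1^d, …, f_r^d)` along the first column, after dividing out the common gcd,
is nonzero, annihilates `f` and each `f_i^d`, and its kernel among polynomials of
degree at most `dδ` is exactly `span{f_1^d, …, f_r^d}`. -/
theorem stmt12 (F : Type*) [Field F] [DecidableEq F] (r d δ : ℕ)
    (hp : ringChar F = 0 ∨ d * δ < ringChar F)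
    (f : F[X]) (β : Fin r → F) (fs : Fin r → F[X])
    (hdeg : ∀ i, (fs i).natDegree ≤ δ)
    (hind : LinearIndependent F fun i => fs i ^ d)
    (hf : f = ∑ i, β i • fs i ^ d) :
    (∃ k, wronskiP r d fs k ≠ 0) ∧
    (∑ k, wronskiP r d fs k *
        (fun p : F[X] => derivative p)^[(k : ℕ)] f = 0) ∧
    (∀ i, ∑ k, wronskiP r d fs k *
        (fun p : F[X] => derivative p)^[(k : ℕ)] (fs i ^ d) = 0) ∧
    ({g : F[X] | g.natDegree ≤ d * δ ∧
        ∑ k, wronskiP r d fs k *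
          (fun p : F[X] => derivative p)^[(k : ℕ)] g = 0} =
      ↑(Submodule.span F (Set.range fun i => fs i ^ d))) := by
  classical
  have hne : ∀ j, fs j ^ d ≠ 0 := fun j => hind.ne_zero j
  have hpne : ∀ j, fs j ^ (d - r) ≠ 0 := by
    intro j
    rcases Nat.eq_zero_or_pos (d - r) with h | h
    · rw [h, pow_zero]; exact one_ne_zero
    · have hd : d ≠ 0 := by omega
      have hfs : fs j ≠ 0 := fun h0 => hne j (by rw [h0, zero_pow hd])
      exact pow_ne_zero _ hfs
  set c : F[X] := ∏ j, fs j ^ (d - r) with hc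
  have hcne : c ≠ 0 := Finset.prod_ne_zero_iff.mpr fun j _ => hpne j
  set u : Fin (r + 1) → Fin r → F[X] :=
    fun i j => derivative^[(i : ℕ)] (fs j ^ d) / fs j ^ (d - r) with hu
  have huu : ∀ (i : Fin (r + 1)) (j : Fin r),
      fs j ^ (d - r) * u i j = derivative^[(i : ℕ)] (fs j ^ d) := by
    intro i j
    apply EuclideanDomain.mul_div_cancel' (hpne j)
    exact (pow_dvd_pow (fs j) (Nat.sub_le_sub_left (Fin.is_le i) d)).trans
      (Polynomial.pow_sub_dvd_iterate_derivative_pow (fs j) d (i : ℕ))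
  set U : Fin (r + 1) → F[X] :=
    fun k => (Matrix.of fun i j : Fin r => u (k.succAbove i) j).det with hU
  have hcof : ∀ k, wronskiCofactor r d fs k = c * U k := by
    intro k
    unfold wronskiCofactor
    have h1 : (Matrix.of fun i j : Fin r =>
        (fun p : F[X] => derivative p)^[((k.succAbove i : Fin (r + 1)) : ℕ)] (fs j ^ d)) =
        Matrix.of fun i j : Fin r => (fs j ^ (d - r)) *
          (Matrix.of fun i j : Fin r => u (k.succAbove i) j) i j := by
      apply Matrix.ext
      intro i j
      simp only [Matrix.of_apply]
      rw [huu]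
    rw [h1, Matrix.det_mul_row]
  have hPt : ∀ k, wronskiPtilde r d fs k = (-1 : F[X]) ^ (k : ℕ) * U k := by
    intro k
    unfold wronskiPtilde
    rw [hcof k, ← hc, mul_left_comm, mul_div_cancel_left₀ _ hcne]
  have hLt : ∀ (g : F[X]) (γ : Fin r → F), g = ∑ j, γ j • fs j ^ d →
      ∑ k, wronskiPtilde r d fs k * (fun p : F[X] => derivative p)^[(k : ℕ)] g = 0 := by
    intro g γ hg
    have hkey := laplace_key r d fs g γ hg
    have h2 : c * ∑ k, wronskiPtilde r d fs k * (fun p : F[X] => derivative p)^[(k : ℕ)] g =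
        ∑ k : Fin (r + 1), (-1 : F[X]) ^ (k : ℕ) *
          ((fun p : F[X] => derivative p)^[(k : ℕ)] g) * wronskiCofactor r d fs k := by
      rw [Finset.mul_sum]
      refine Finset.sum_congr rfl fun k _ => ?_
      rw [hPt k, hcof k]
      ring
    exact (mul_eq_zero.mp (h2.trans hkey)).resolve_left hcne
  have hdegs : ∀ j, (fs j ^ d).natDegree ≤ d * δ :=
    fun j => natDegree_pow_le_of_le d (hdeg j)
  have hWlast : wronskiCofactor r d fs (Fin.last r) ≠ 0 := by
    have hW := wronskian_det_ne_zero hp (fun j => fs j ^ d) hdegs hind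
    have heq : wronskiCofactor r d fs (Fin.last r) =
        (Matrix.of fun i j : Fin r =>
          (fun p : F[X] => derivative p)^[(i : ℕ)] (fs j ^ d)).det := by
      unfold wronskiCofactor
      have hmat : (Matrix.of fun i j : Fin r =>
          (fun p : F[X] => derivative p)^[(((Fin.last r).succAbove i : Fin (r + 1)) : ℕ)]
            (fs j ^ d)) =
          Matrix.of fun i j : Fin r =>
            (fun p : F[X] => derivative p)^[(i : ℕ)] (fs j ^ d) := by
        apply Matrix.ext
        intro i j
        simp [Fin.succAbove_last]
      rw [hmat]
    rw [heq]
    exact hW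
  have hUlast : U (Fin.last r) ≠ 0 := fun h => hWlast (by rw [hcof, h, mul_zero])
  have hPtlast : wronskiPtilde r d fs (Fin.last r) ≠ 0 := by
    rw [hPt]
    exact mul_ne_zero (pow_ne_zero _ (neg_ne_zero.mpr one_ne_zero)) hUlast
  set G : F[X] := Finset.univ.gcd (wronskiPtilde r d fs) with hGdef
  have hGne : G ≠ 0 := fun h => hPtlast (Finset.gcd_eq_zero_iff.mp h _ (Finset.mem_univ _))
  have hGP : ∀ k, G * wronskiP r d fs k = wronskiPtilde r d fs k := by
    intro k
    unfold wronskiP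
    rw [← hGdef]
    exact EuclideanDomain.mul_div_cancel' hGne (Finset.gcd_dvd (Finset.mem_univ k))
  have hPlast : wronskiP r d fs (Fin.last r) ≠ 0 := by
    intro h
    apply hPtlast
    rw [← hGP, h, mul_zero]
  have hsol : ∀ g : F[X], g ∈ Submodule.span F (Set.range fun i => fs i ^ d) →
      ∑ k, wronskiP r d fs k * (fun p : F[X] => derivative p)^[(k : ℕ)] g = 0 := by
    intro g hg
    obtain ⟨γ, hγ⟩ := (Submodule.mem_span_range_iff_exists_fun F).mp hg
    have h1 := hLt g γ hγ.symm
    have h2 : G * ∑ k, wronskiP r d fs k * (fun p : F[X] => derivative p)^[(k : ℕ)] g =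
        ∑ k, wronskiPtilde r d fs k * (fun p : F[X] => derivative p)^[(k : ℕ)] g := by
      rw [Finset.mul_sum]
      refine Finset.sum_congr rfl fun k _ => ?_
      rw [← hGP k]
      ring
    exact (mul_eq_zero.mp (h2.trans h1)).resolve_left hGne
  refine ⟨⟨Fin.last r, hPlast⟩, ?_, ?_, ?_⟩
  · exact hsol f (by
      rw [hf]
      exact Submodule.sum_mem _ fun i _ =>
        Submodule.smul_mem _ _ (Submodule.subset_span ⟨i, rfl⟩))
  · exact fun i => hsol _ (Submodule.subset_span ⟨i, rfl⟩)
  · ext g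
    simp only [Set.mem_setOf_eq, SetLike.mem_coe]
    constructor
    · rintro ⟨hgdeg, hgsol⟩
      by_contra hgs
      have hli : LinearIndependent F (Fin.cons g (fun i => fs i ^ d) : Fin (r + 1) → F[X]) :=
        linearIndependent_fin_cons.mpr ⟨hind, hgs⟩
      have hdegs' : ∀ j : Fin (r + 1),
          ((Fin.cons g (fun i => fs i ^ d) : Fin (r + 1) → F[X]) j).natDegree ≤ d * δ := by
        intro j
        refine Fin.cases ?_ ?_ j
        · simpa using hgdeg
        · intro i
          simpa using hdegs i
      have hW := wronskian_det_ne_zero hp _ hdegs' hli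
      apply hW
      rw [← Matrix.det_transpose]
      apply Matrix.exists_mulVec_eq_zero_iff.mp
      refine ⟨wronskiP r d fs, ?_, ?_⟩
      · intro h
        exact hPlast (congrFun h (Fin.last r))
      · funext j
        simp only [Matrix.mulVec, dotProduct, Matrix.transpose_apply, Matrix.of_apply,
          Pi.zero_apply]
        have hcomm : ∑ k : Fin (r + 1),
            ((fun p : F[X] => derivative p)^[(k : ℕ)]
              ((Fin.cons g (fun i => fs i ^ d) : Fin (r + 1) → F[X]) j)) * wronskiP r d fs k =
            ∑ k : Fin (r + 1), wronskiP r d fs k *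
              (fun p : F[X] => derivative p)^[(k : ℕ)]
                ((Fin.cons g (fun i => fs i ^ d) : Fin (r + 1) → F[X]) j) :=
          Finset.sum_congr rfl fun k _ => mul_comm _ _
        rw [hcomm]
        refine Fin.cases ?_ ?_ j
        · simpa using hgsol
        · intro i
          simpa using hsol _ (Submodule.subset_span ⟨i, rfl⟩)
    · intro hgs
      refine ⟨?_, hsol g hgs⟩
      obtain ⟨γ, hγ⟩ := (Submodule.mem_span_range_iff_exists_fun F).mp hgs
      rw [← hγ]
      refine natDegree_sum_le_of_forall_le _ _ fun i _ => ?_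
      exact (natDegree_smul_le _ _).trans (hdegs i)
end

section
/- Let q be prime, k ∈ {1,...,q-1}, and λ ∈ F* an element of multiplicative order greater than δ. Define the modified Klivans–Spielman maps Ψ_{k,q}(x_i) = y^{(k^{i-1} mod q)} and Ψ_{j,k,q,λ}(x_i) = λ·y^{(k^{j-1} mod q)} if i = j, else y^{(k^{i-1} mod q)}. Suppose f = ∑_e c_e x^e is a polynomial of degree ≤ δ such that Ψ_{k,q} maps distinct monomials of f to distinct monomials of y (i.e., the exponent map e ↦ ∑_i e_i (k^{i-1} mod q) is injective on the support of f). Then f is uniquely determined by, and can be recovered from, the n+1 univariate polynomials Ψ_{k,q}(f) and Ψ_{j,k,q,λ}(f), j = 1, ..., n. -/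
open Polynomial

lemma ks_aeval {F : Type*} [Field F] {n : ℕ} (c : Fin n → F) (w : Fin n → ℕ)
    (f : MvPolynomial (Fin n) F) :
    MvPolynomial.aeval (fun i : Fin n => Polynomial.C (c i) * (X : F[X]) ^ (w i)) f =
      ∑ e ∈ f.support, Polynomial.C (f.coeff e * ∏ i, c i ^ e i) * X ^ (∑ i, e i * w i) := by
  conv_lhs => rw [f.as_sum]
  rw [map_sum]
  refine Finset.sum_congr rfl fun e he => ?_
  rw [MvPolynomial.aeval_monomial]
  rw [Finsupp.prod_fintype]
  · simp only [mul_pow, ← C_pow]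
    rw [Finset.prod_mul_distrib, ← map_prod, ← Finset.prod_pow_eq_pow_sum]
    · ring_nf
      simp [mul_comm, mul_assoc, mul_left_comm, pow_mul, algebraMap_eq]
      try ring
  · intro i; simp

lemma ks_coeff {F : Type*} [Field F] {ι : Type*} (s : Finset ι) (a : ι → F) (m : ι → ℕ)
    (hm : Set.InjOn m s) (M : ℕ) :
    (∑ e ∈ s, Polynomial.C (a e) * X ^ (m e)).coeff M =
      if h : ∃ e ∈ s, m e = M then a h.choose else 0 := by
  simp only [finset_sum_coeff, coeff_C_mul, coeff_X_pow, mul_ite, mul_one, mul_zero]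
  split
  · next h =>
    obtain ⟨he, hme⟩ := h.choose_spec
    rw [Finset.sum_eq_single h.choose]
    · rw [if_pos hme.symm]
    · intro b hb hne
      rw [if_neg]
      intro hbM
      exact hne (hm hb he (hbM.symm.trans hme.symm))
    · intro hne; exact absurd he hne
  · next h =>
    push_neg at h
    exact Finset.sum_eq_zero fun b hb => by rw [if_neg fun hh => h b hb hh.symm]

lemma ks_coeff_mem {F : Type*} [Field F] {ι : Type*} (s : Finset ι) (a : ι → F) (m : ι → ℕ)
    (hm : Set.InjOn m s) {e₀ : ι} (he : e₀ ∈ s) :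
    (∑ e ∈ s, Polynomial.C (a e) * X ^ (m e)).coeff (m e₀) = a e₀ := by
  rw [ks_coeff s a m hm]
  have hex : ∃ e ∈ s, m e = m e₀ := ⟨e₀, he, rfl⟩
  rw [dif_pos hex]
  exact congrArg a (hm hex.choose_spec.1 he hex.choose_spec.2)

lemma ks_coeff_notmem {F : Type*} [Field F] {ι : Type*} (s : Finset ι) (a : ι → F) (m : ι → ℕ)
    (hm : Set.InjOn m s) {M : ℕ} (h : ∀ e ∈ s, m e ≠ M) :
    (∑ e ∈ s, Polynomial.C (a e) * X ^ (m e)).coeff M = 0 := by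
  rw [ks_coeff s a m hm, dif_neg]
  rintro ⟨e, he, hme⟩
  exact h e he hme

lemma ks_main {F : Type*} [Field F] {n δ : ℕ} (w : Fin n → ℕ)
    (lam : Fˣ) (hlam : orderOf lam = 0 ∨ δ < orderOf lam)
    (f f' : MvPolynomial (Fin n) F)
    (hfdeg : f.totalDegree ≤ δ) (hf'deg : f'.totalDegree ≤ δ)
    (hinj : Set.InjOn (fun e : Fin n →₀ ℕ => ∑ i, e i * w i) ↑f.support)
    (hinj' : Set.InjOn (fun e : Fin n →₀ ℕ => ∑ i, e i * w i) ↑f'.support)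
    (h0 : MvPolynomial.aeval (fun i : Fin n => (X : F[X]) ^ (w i)) f =
          MvPolynomial.aeval (fun i : Fin n => (X : F[X]) ^ (w i)) f')
    (hj : ∀ j : Fin n,
      MvPolynomial.aeval (fun i : Fin n =>
          if i = j then Polynomial.C (lam : F) * (X : F[X]) ^ (w i)
          else (X : F[X]) ^ (w i)) f =
      MvPolynomial.aeval (fun i : Fin n =>
          if i = j then Polynomial.C (lam : F) * (X : F[X]) ^ (w i)
          else (X : F[X]) ^ (w i)) f') :
    ∀ e ∈ f.support, f.coeff e = f'.coeff e := by
  have H0 : ∀ g : MvPolynomial (Fin n) F,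
      MvPolynomial.aeval (fun i : Fin n => (X : F[X]) ^ (w i)) g =
        ∑ e ∈ g.support, Polynomial.C (g.coeff e) * X ^ (∑ i, e i * w i) := by
    intro g
    have := ks_aeval (fun _ => (1 : F)) w g
    simpa using this
  have HJ : ∀ (j : Fin n) (g : MvPolynomial (Fin n) F),
      MvPolynomial.aeval (fun i : Fin n =>
          if i = j then Polynomial.C (lam : F) * (X : F[X]) ^ (w i)
          else (X : F[X]) ^ (w i)) g =
        ∑ e ∈ g.support, Polynomial.C (g.coeff e * (lam : F) ^ e j) * X ^ (∑ i, e i * w i) := by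
    intro j g
    have hfn : (fun i : Fin n => Polynomial.C (if i = j then (lam : F) else 1) * (X : F[X]) ^ w i)
        = fun i : Fin n => if i = j then Polynomial.C (lam : F) * (X : F[X]) ^ (w i)
          else (X : F[X]) ^ (w i) := by
      funext i; split <;> simp
    have := ks_aeval (fun i => if i = j then (lam : F) else 1) w g
    rw [hfn] at this
    rw [this]
    refine Finset.sum_congr rfl fun e he => ?_
    congr 2
    rw [Finset.prod_eq_single j (fun b _ hb => by rw [if_neg hb, one_pow]) (by simp)]
    rw [if_pos rfl]
  intro e he
  set m : (Fin n →₀ ℕ) → ℕ := fun e => ∑ i, e i * w i with hmdef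
  have hbound : ∀ (g : MvPolynomial (Fin n) F), g.totalDegree ≤ δ →
      ∀ e ∈ g.support, ∀ j : Fin n, e j ≤ δ := by
    intro g hg e he j
    calc e j ≤ ∑ i, e i := Finset.single_le_sum (fun i _ => Nat.zero_le _) (Finset.mem_univ j)
    _ = e.sum fun _ x => x := (Finsupp.sum_fintype e (fun _ x => x) fun _ => rfl).symm
    _ ≤ g.totalDegree := MvPolynomial.le_totalDegree he
    _ ≤ δ := hg
  have hcne : f.coeff e ≠ 0 := MvPolynomial.mem_support_iff.mp he
  rw [H0 f, H0 f'] at h0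
  by_cases hex : ∃ e' ∈ f'.support, m e' = m e
  · obtain ⟨e', he', hme'⟩ := hex
    have L := ks_coeff_mem f.support f.coeff m hinj he
    have R := ks_coeff_mem f'.support f'.coeff m hinj' he'
    rw [hme'] at R
    rw [h0] at L
    have hc : f.coeff e = f'.coeff e' := L.symm.trans R
    have hcj : ∀ j : Fin n, f.coeff e * (lam : F) ^ e j = f'.coeff e' * (lam : F) ^ e' j := by
      intro j
      have hj' := hj j
      rw [HJ j f, HJ j f'] at hj'
      have Lj := ks_coeff_mem f.support (fun e => f.coeff e * (lam : F) ^ e j) m hinj he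
      have Rj := ks_coeff_mem f'.support (fun e => f'.coeff e * (lam : F) ^ e j) m hinj' he'
      rw [hme'] at Rj
      rw [hj'] at Lj
      exact Lj.symm.trans Rj
    have hee : e = e' := by
      ext j
      have hp : (lam : F) ^ e j = (lam : F) ^ e' j := by
        have := hcj j
        rw [hc] at this
        have hc'ne : f'.coeff e' ≠ 0 := MvPolynomial.mem_support_iff.mp he'
        rw [hc] at hcne
        exact mul_left_cancel₀ hc'ne this
      have hu : lam ^ e j = lam ^ e' j := by
        apply Units.ext
        simpa using hp
      rcases hlam with h | h
      · exact (pow_inj_iff_of_orderOf_eq_zero h).mp hu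
      · exact pow_injOn_Iio_orderOf
          (Set.mem_Iio.mpr (lt_of_le_of_lt (hbound f hfdeg e he j) h))
          (Set.mem_Iio.mpr (lt_of_le_of_lt (hbound f' hf'deg e' he' j) h)) hu
    exact hee ▸ hc
  · exfalso
    push_neg at hex
    have := ks_coeff_notmem f'.support f'.coeff m hinj' hex
    rw [← h0] at this
    rw [ks_coeff_mem f.support f.coeff m hinj he] at this
    exact hcne this

/-- Recovery from the modified Klivans–Spielman maps: if `λ` has multiplicative order
greater than `δ` (or infinite order), `f` and `f'` have degree at most `δ`, and the
Klivans–Spielman exponent map is injective on their supports, then `f` is uniquely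
determined by the `n + 1` univariate images `Ψ_{k,q}(·)` and `Ψ_{j,k,q,λ}(·)`,
`j = 1, …, n`. -/
theorem stmt18 (F : Type*) [Field F] (n δ q k : ℕ) (hq : q.Prime)
    (hk1 : 1 ≤ k) (hk2 : k ≤ q - 1)
    (lam : Fˣ) (hlam : orderOf lam = 0 ∨ δ < orderOf lam)
    (f f' : MvPolynomial (Fin n) F)
    (hfdeg : f.totalDegree ≤ δ) (hf'deg : f'.totalDegree ≤ δ)
    (hinj : Set.InjOn (fun e : Fin n →₀ ℕ => ∑ i, e i * (k ^ (i : ℕ) % q)) ↑f.support)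
    (hinj' : Set.InjOn (fun e : Fin n →₀ ℕ => ∑ i, e i * (k ^ (i : ℕ) % q)) ↑f'.support)
    (h0 : MvPolynomial.aeval (fun i : Fin n => (X : F[X]) ^ (k ^ (i : ℕ) % q)) f =
          MvPolynomial.aeval (fun i : Fin n => (X : F[X]) ^ (k ^ (i : ℕ) % q)) f')
    (hj : ∀ j : Fin n,
      MvPolynomial.aeval (fun i : Fin n =>
          if i = j then Polynomial.C (lam : F) * (X : F[X]) ^ (k ^ (i : ℕ) % q)
          else (X : F[X]) ^ (k ^ (i : ℕ) % q)) f =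
      MvPolynomial.aeval (fun i : Fin n =>
          if i = j then Polynomial.C (lam : F) * (X : F[X]) ^ (k ^ (i : ℕ) % q)
          else (X : F[X]) ^ (k ^ (i : ℕ) % q)) f') :
    f = f' := by
  have h1 := ks_main (fun i : Fin n => k ^ (i : ℕ) % q) lam hlam f f'
    hfdeg hf'deg hinj hinj' h0 hj
  have h2 := ks_main (fun i : Fin n => k ^ (i : ℕ) % q) lam hlam f' f
    hf'deg hfdeg hinj' hinj h0.symm (fun j => (hj j).symm)
  apply MvPolynomial.ext
  intro e
  by_cases he : e ∈ f.support
  · exact h1 e he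
  · by_cases he' : e ∈ f'.support
    · exact (h2 e he').symm
    · rw [MvPolynomial.notMem_support_iff.mp he, MvPolynomial.notMem_support_iff.mp he']
end
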